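/- arXiv:2201.01211 — 3 statements merged into one kernel-verified Lean document; each statement's English description precedes it below -/
import Mathlib

section
/- Let S be a finite nonempty set of positive integers with maximum element n_h, and let Q_S = {∞} ∪ {n/m : n ∈ S, m ∈ ℤ, m ≠ 0} ⊆ ℚ̄. Let L = [a,b] be a closed circular interval in ℚ̄ with endpoints a, b ∈ Q_S whose interior [a,b] \ {a,b} is disjoint from Q_S. If ∞ ∈ L and L has at least two elements, then either L = [n_h, ∞] = {∞} ∪ {q ∈ ℚ : q ≥ n_h} or L = [∞, −n_h] = {∞} ∪ {q ∈ ℚ : q ≤ −n_h}. -/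
/-- The closed circular interval `[a,b]` in `ℚ̄ = ℚ ∪ {∞}`, where `∞` is
represented by `none`. -/
def cInt : Option ℚ → Option ℚ → Set (Option ℚ)
  | some a, some b =>
      if a ≤ b then {x | ∃ q : ℚ, x = some q ∧ a ≤ q ∧ q ≤ b}
      else {none} ∪ {x | ∃ q : ℚ, x = some q ∧ (a ≤ q ∨ q ≤ b)}
  | some a, none => {none} ∪ {x | ∃ q : ℚ, x = some q ∧ a ≤ q}
  | none, some b => {none} ∪ {x | ∃ q : ℚ, x = some q ∧ q ≤ b}
  | none, none => {none}

lemma qs_bound (S : Finset ℤ) (hS : S.Nonempty) (hpos : ∀ n ∈ S, 0 < n)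
    (n : ℤ) (hn : n ∈ S) (m : ℤ) (hm : m ≠ 0) :
    -((S.max' hS : ℤ) : ℚ) ≤ (n : ℚ) / (m : ℚ) ∧
      (n : ℚ) / (m : ℚ) ≤ ((S.max' hS : ℤ) : ℚ) := by
  have hn0 : (0 : ℚ) < (n : ℚ) := by exact_mod_cast hpos n hn
  have hle : (n : ℚ) ≤ ((S.max' hS : ℤ) : ℚ) := by
    exact_mod_cast S.le_max' n hn
  have habs : (1 : ℚ) ≤ |(m : ℚ)| := by
    have := Int.one_le_abs hm
    calc (1 : ℚ) ≤ ((|m| : ℤ) : ℚ) := by exact_mod_cast this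
      _ = |(m : ℚ)| := by rw [Int.cast_abs]
  have key : |(n : ℚ) / (m : ℚ)| ≤ (n : ℚ) := by
    rw [abs_div, abs_of_pos hn0]
    exact div_le_self hn0.le habs
  have h1 := abs_le.mp key
  constructor
  · linarith [h1.1]
  · linarith [h1.2]

/-- If `S` is a finite nonempty set of positive integers with maximum `n_h`,
`Q_S = {∞} ∪ {n/m : n ∈ S, m ≠ 0}`, and `L = [a,b]` is a closed circular
interval in `ℚ̄` with endpoints in `Q_S`, interior disjoint from `Q_S`,
containing `∞` and at least two elements, then `L = [n_h, ∞]` or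
`L = [∞, -n_h]`. -/
theorem interval_lemma (S : Finset ℤ) (hS : S.Nonempty) (hpos : ∀ n ∈ S, 0 < n)
    (nh : ℤ) (hnh : nh = S.max' hS)
    (QS : Set (Option ℚ))
    (hQS : QS = {none} ∪
      {x | ∃ n ∈ S, ∃ m : ℤ, m ≠ 0 ∧ x = some ((n : ℚ) / (m : ℚ))})
    (a b : Option ℚ) (ha : a ∈ QS) (hb : b ∈ QS)
    (L : Set (Option ℚ)) (hL : L = cInt a b)
    (hint : (L \ {a, b}) ∩ QS = ∅)
    (hinf : none ∈ L)
    (htwo : L.Nontrivial) :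
    L = {none} ∪ {x | ∃ q : ℚ, x = some q ∧ (nh : ℚ) ≤ q} ∨
    L = {none} ∪ {x | ∃ q : ℚ, x = some q ∧ q ≤ -(nh : ℚ)} := by
  subst hnh hQS hL
  have hmem : S.max' hS ∈ S := S.max'_mem hS
  have hintne := Set.eq_empty_iff_forall_notMem.mp hint
  -- ∞ = n_h / 1 form and -n_h = n_h / (-1) form memberships in QS
  have hnhQS : (some ((S.max' hS : ℤ) : ℚ) : Option ℚ) ∈
      ({none} ∪ {x | ∃ n ∈ S, ∃ m : ℤ, m ≠ 0 ∧ x = some ((n : ℚ) / (m : ℚ))} :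
        Set (Option ℚ)) := by
    right
    exact ⟨S.max' hS, hmem, 1, one_ne_zero, by norm_num⟩
  have hnegQS : (some (-((S.max' hS : ℤ) : ℚ)) : Option ℚ) ∈
      ({none} ∪ {x | ∃ n ∈ S, ∃ m : ℤ, m ≠ 0 ∧ x = some ((n : ℚ) / (m : ℚ))} :
        Set (Option ℚ)) := by
    right
    refine ⟨S.max' hS, hmem, -1, by norm_num, ?_⟩
    norm_num [div_neg]
  rcases a with _ | α <;> rcases b with _ | β
  · -- a = none, b = none : L = {∞}, contradicts nontrivial
    exfalso
    obtain ⟨x, hx, y, hy, hxy⟩ := htwo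
    simp only [cInt, Set.mem_singleton_iff] at hx hy
    exact hxy (hx.trans hy.symm)
  · -- a = none, b = some β : L = [∞, β]; show β = -n_h
    right
    obtain ⟨n, hn, m, hm, heq⟩ := hb.resolve_left (by simp)
    have hβ : β = (n : ℚ) / (m : ℚ) := by injection heq
    have hβle : -((S.max' hS : ℤ) : ℚ) ≤ β := by
      rw [hβ]; exact (qs_bound S hS hpos n hn m hm).1
    have hβge : β ≤ -((S.max' hS : ℤ) : ℚ) := by
      by_contra h
      push_neg at h
      refine hintne (some (-((S.max' hS : ℤ) : ℚ))) ⟨⟨?_, ?_⟩, hnegQS⟩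
      · exact Or.inr ⟨_, rfl, h.le⟩
      · simp only [Set.mem_insert_iff, Set.mem_singleton_iff]
        push_neg
        exact ⟨by simp, by simp [h.ne]⟩
    have : β = -((S.max' hS : ℤ) : ℚ) := le_antisymm hβge hβle
    rw [show cInt none (some β) =
        {none} ∪ {x | ∃ q : ℚ, x = some q ∧ q ≤ β} from rfl, this]
  · -- a = some α, b = none : L = [α, ∞]; show α = n_h
    left
    obtain ⟨n, hn, m, hm, heq⟩ := ha.resolve_left (by simp)
    have hα : α = (n : ℚ) / (m : ℚ) := by injection heq
    have hαle : α ≤ ((S.max' hS : ℤ) : ℚ) := by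
      rw [hα]; exact (qs_bound S hS hpos n hn m hm).2
    have hαge : ((S.max' hS : ℤ) : ℚ) ≤ α := by
      by_contra h
      push_neg at h
      refine hintne (some ((S.max' hS : ℤ) : ℚ)) ⟨⟨?_, ?_⟩, hnhQS⟩
      · exact Or.inr ⟨_, rfl, h.le⟩
      · simp only [Set.mem_insert_iff, Set.mem_singleton_iff]
        push_neg
        exact ⟨by simp [h.ne'], by simp⟩
    have : α = ((S.max' hS : ℤ) : ℚ) := le_antisymm hαle hαge
    rw [show cInt (some α) none =
        {none} ∪ {x | ∃ q : ℚ, x = some q ∧ α ≤ q} from rfl, this]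
  · -- a = some α, b = some β : impossible
    exfalso
    by_cases hab : α ≤ β
    · simp only [cInt, if_pos hab, Set.mem_setOf_eq] at hinf
      obtain ⟨q, hq, _⟩ := hinf
      exact Option.some_ne_none q hq.symm
    · refine hintne none ⟨⟨hinf, ?_⟩, Or.inl rfl⟩
      simp
end

section
/- Let L ⊆ ℚ̄ × ℚ̄ satisfy the slice dichotomy and the unknot condition. Suppose (r₁, r₂) ∈ L where r₁ and r₂ are positive rational numbers. For i = 1, 2 define I_i ⊆ ℚ̄ by I_i = [⌊r_i⌋, ∞] if r_i ≥ 1, and I_i = {∞} ∪ {q ∈ ℚ : q > 0} if 0 < r_i < 1. Then I₁ × I₂ ⊆ L. -/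
/-- The interval `[k,∞] = {∞} ∪ {q : k ≤ q}` in `ℚ̄ = ℚ ∪ {∞}` (`∞ = none`). -/
def infSlice (k : ℤ) : Set (Option ℚ) :=
  {none} ∪ {x | ∃ q : ℚ, x = some q ∧ (k : ℚ) ≤ q}

/-- The interval `[∞,−k] = {∞} ∪ {q : q ≤ −k}` in `ℚ̄`. -/
def negSlice (k : ℤ) : Set (Option ℚ) :=
  {none} ∪ {x | ∃ q : ℚ, x = some q ∧ q ≤ -(k : ℚ)}

/-- A subset of `ℚ̄` is a standard slice if it is `ℚ̄ \ {0}`, or `[k,∞]`,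
or `[∞,−k]` for some positive integer `k`. -/
def StandardSlice (I : Set (Option ℚ)) : Prop :=
  I = {some 0}ᶜ ∨ (∃ k : ℤ, 0 < k ∧ I = infSlice k) ∨
    (∃ k : ℤ, 0 < k ∧ I = negSlice k)

/-- `L` satisfies the slice dichotomy if every horizontal or vertical slice of
`L` with at least two elements is a standard slice. -/
def SliceDichotomy (L : Set (Option ℚ × Option ℚ)) : Prop :=
  ∀ r : Option ℚ,
    ({s | (r, s) ∈ L}.Nontrivial → StandardSlice {s | (r, s) ∈ L}) ∧
    ({s | (s, r) ∈ L}.Nontrivial → StandardSlice {s | (s, r) ∈ L})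

/-- `L` satisfies the unknot condition if `(∞,s) ∈ L` and `(s,∞) ∈ L` for
every `s ∈ ℚ̄` with `s ≠ 0`. -/
def UnknotCondition (L : Set (Option ℚ × Option ℚ)) : Prop :=
  ∀ s : Option ℚ, s ≠ some 0 → (none, s) ∈ L ∧ (s, none) ∈ L

/-- `L` satisfies the no-zero condition if `(r,0) ∉ L` and `(0,r) ∉ L` for
every `r ∈ ℚ̄`. -/
def NoZeroCondition (L : Set (Option ℚ × Option ℚ)) : Prop :=
  ∀ r : Option ℚ, (r, some 0) ∉ L ∧ (some 0, r) ∉ L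

/-- The set `Q* = {q ∈ ℚ : q ≠ 0} ⊆ ℚ̄`. -/
def Qstar : Set (Option ℚ) := {x | ∃ q : ℚ, q ≠ 0 ∧ x = some q}

lemma mem_interval_ne_zero (r : ℚ) (hr : 0 < r) (x : Option ℚ)
    (hx : x ∈ (if 1 ≤ r then infSlice ⌊r⌋
      else {none} ∪ {x | ∃ q : ℚ, x = some q ∧ 0 < q})) : x ≠ some 0 := by
  split_ifs at hx with h1
  · rcases hx with hx | ⟨q, rfl, hq⟩
    · simp only [Set.mem_singleton_iff] at hx; subst hx; simp
    · have : (1 : ℚ) ≤ q := le_trans (by exact_mod_cast Int.le_floor.mpr (by exact_mod_cast h1)) hq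
      simp only [ne_eq, Option.some.injEq]
      intro h; rw [h] at this; linarith
  · rcases hx with hx | ⟨q, rfl, hq⟩
    · simp only [Set.mem_singleton_iff] at hx; subst hx; simp
    · simp only [ne_eq, Option.some.injEq]
      intro h; rw [h] at hq; linarith

lemma interval_subset_slice (S : Set (Option ℚ)) (hS : StandardSlice S)
    (r : ℚ) (hr : 0 < r) (hmem : some r ∈ S) :
    (if 1 ≤ r then infSlice ⌊r⌋
      else {none} ∪ {x | ∃ q : ℚ, x = some q ∧ 0 < q}) ⊆ S := by
  rcases hS with h | ⟨k, hk, h⟩ | ⟨k, hk, h⟩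
  · subst h
    intro x hx
    exact mem_interval_ne_zero r hr x hx
  · subst h
    rcases hmem with hm | ⟨q, hq, hkq⟩
    · simp at hm
    · have hqr : q = r := by simpa using hq.symm
      rw [hqr] at hkq
      have hkr : (k : ℚ) ≤ r := hkq
      have h1r : (1 : ℚ) ≤ r := le_trans (by exact_mod_cast hk) hkr
      rw [if_pos h1r]
      intro x hx
      rcases hx with hx | ⟨q, rfl, hq⟩
      · exact Or.inl hx
      · refine Or.inr ⟨q, rfl, ?_⟩
        have : (k : ℚ) ≤ (⌊r⌋ : ℚ) := by exact_mod_cast Int.le_floor.mpr hkr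
        linarith
  · subst h
    rcases hmem with hm | ⟨q, hq, hkq⟩
    · simp at hm
    · have hqr : q = r := by simpa using hq.symm
      rw [hqr] at hkq
      have : (0 : ℚ) < k := by exact_mod_cast hk
      linarith

/-- A positive rational L-space slope propagates: if `(r₁, r₂) ∈ L` with
`r₁, r₂ > 0`, then `I₁ × I₂ ⊆ L`, where `I_i = [⌊r_i⌋, ∞]` if `r_i ≥ 1` and
`I_i = {∞} ∪ {q > 0}` if `0 < r_i < 1`. -/
theorem lspace_slope_propagation (L : Set (Option ℚ × Option ℚ))
    (hdich : SliceDichotomy L) (hunknot : UnknotCondition L)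
    (r₁ r₂ : ℚ) (hr₁ : 0 < r₁) (hr₂ : 0 < r₂)
    (hmem : (some r₁, some r₂) ∈ L)
    (I₁ I₂ : Set (Option ℚ))
    (hI₁ : I₁ = if 1 ≤ r₁ then infSlice ⌊r₁⌋
      else {none} ∪ {x | ∃ q : ℚ, x = some q ∧ 0 < q})
    (hI₂ : I₂ = if 1 ≤ r₂ then infSlice ⌊r₂⌋
      else {none} ∪ {x | ∃ q : ℚ, x = some q ∧ 0 < q}) :
    I₁ ×ˢ I₂ ⊆ L := by
  subst hI₁ hI₂
  rintro ⟨x, y⟩ ⟨hx, hy⟩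
  have hxne : x ≠ some 0 := mem_interval_ne_zero r₁ hr₁ x hx
  have hV : StandardSlice {s | (s, some r₂) ∈ L} := by
    apply (hdich (some r₂)).2
    exact ⟨none, (hunknot (some r₂) (by simp [hr₂.ne'])).1, some r₁, hmem, by simp⟩
  have hxL : (x, some r₂) ∈ L :=
    interval_subset_slice _ hV r₁ hr₁ hmem hx
  have hH : StandardSlice {s | (x, s) ∈ L} := by
    apply (hdich x).1
    exact ⟨none, (hunknot x hxne).2, some r₂, hxL, by simp⟩
  exact interval_subset_slice _ hH r₂ hr₂ hxL hy
end

section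
/- Let L ⊆ ℚ̄ × ℚ̄ satisfy the slice dichotomy, the unknot condition, and the no-zero condition, and suppose there exist natural numbers b₁, b₂ such that for all integers p₁, p₂ one has ((p₁ : ℚ), (p₂ : ℚ)) ∈ L if and only if p₁ ≥ 2b₁ + 1 and p₂ ≥ 2b₂ + 1. Then L = ([2b₁+1, ∞] × [2b₂+1, ∞]) ∪ ({∞} × Q*) ∪ (Q* × {∞}), where Q* = {q ∈ ℚ : q ≠ 0} ⊆ ℚ̄. -/
lemma mem_infSlice_some {k : ℤ} {q : ℚ} : some q ∈ infSlice k ↔ (k : ℚ) ≤ q := by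
  simp [infSlice]

lemma none_mem_infSlice {k : ℤ} : (none : Option ℚ) ∈ infSlice k := Or.inl rfl

lemma mem_negSlice_some {k : ℤ} {q : ℚ} : some q ∈ negSlice k ↔ q ≤ -(k : ℚ) := by
  simp [negSlice]

lemma std_int {I : Set (Option ℚ)} (h : StandardSlice I) :
    ∃ p : ℤ, p ≠ 0 ∧ (some (p : ℚ)) ∈ I := by
  rcases h with h | ⟨k, hk, h⟩ | ⟨k, hk, h⟩
  · exact ⟨1, one_ne_zero, by rw [h]; simp⟩
  · exact ⟨k, hk.ne', by rw [h, mem_infSlice_some]⟩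
  · exact ⟨-k, by omega, by rw [h, mem_negSlice_some]; push_cast; exact le_rfl⟩

section
variable {L : Set (Option ℚ × Option ℚ)}

lemma rowInt (hdich : SliceDichotomy L) (hunknot : UnknotCondition L)
    (hnozero : NoZeroCondition L) {t q : ℚ} (h : (some t, some q) ∈ L) :
    ∃ p : ℤ, p ≠ 0 ∧ (some (p : ℚ), some q) ∈ L := by
  have hq : q ≠ 0 := by rintro rfl; exact (hnozero (some t)).1 h
  have hn : ((none : Option ℚ), some q) ∈ L :=
    (hunknot (some q) (by simp [hq])).1
  have hs : StandardSlice {s | (s, some q) ∈ L} :=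
    (hdich (some q)).2 ⟨some t, h, none, hn, by simp⟩
  exact std_int hs

lemma colInt (hdich : SliceDichotomy L) (hunknot : UnknotCondition L)
    (hnozero : NoZeroCondition L) {t q : ℚ} (h : (some t, some q) ∈ L) :
    ∃ p : ℤ, p ≠ 0 ∧ (some t, some (p : ℚ)) ∈ L := by
  have ht : t ≠ 0 := by rintro rfl; exact (hnozero (some q)).2 h
  have hn : (some t, (none : Option ℚ)) ∈ L :=
    (hunknot (some t) (by simp [ht])).2
  have hs : StandardSlice {s | (some t, s) ∈ L} :=
    (hdich (some t)).1 ⟨some q, h, none, hn, by simp⟩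
  exact std_int hs

lemma row_eq (hdich : SliceDichotomy L) (hunknot : UnknotCondition L)
    (hnozero : NoZeroCondition L) (b₁ b₂ : ℕ)
    (hint : ∀ p₁ p₂ : ℤ,
      (some (p₁ : ℚ), some (p₂ : ℚ)) ∈ L ↔
        (2 * (b₁ : ℤ) + 1 ≤ p₁ ∧ 2 * (b₂ : ℤ) + 1 ≤ p₂))
    {p₂ : ℤ} (hp₂ : 2 * (b₂ : ℤ) + 1 ≤ p₂) :
    {t | (t, some ((p₂ : ℚ))) ∈ L} = infSlice (2 * (b₁ : ℤ) + 1) := by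
  have hmem : (some ((2 * (b₁ : ℤ) + 1 : ℤ) : ℚ), some ((p₂ : ℤ) : ℚ)) ∈ L :=
    (hint _ p₂).mpr ⟨le_refl _, hp₂⟩
  have hp₂0 : ((p₂ : ℤ) : ℚ) ≠ 0 := by
    have : p₂ ≠ 0 := by omega
    exact_mod_cast this
  have hn : ((none : Option ℚ), some ((p₂ : ℤ) : ℚ)) ∈ L :=
    (hunknot (some ((p₂ : ℤ) : ℚ)) (by simp [hp₂0])).1
  have hs : StandardSlice {t | (t, some ((p₂ : ℤ) : ℚ)) ∈ L} :=
    (hdich (some ((p₂ : ℤ) : ℚ))).2 ⟨_, hmem, _, hn, by simp⟩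
  rcases hs with h | ⟨k, hk, h⟩ | ⟨k, hk, h⟩
  · exfalso
    have hm : some (((-1 : ℤ)) : ℚ) ∈ {t | (t, some ((p₂ : ℤ) : ℚ)) ∈ L} := by
      rw [h]
      simp only [Set.mem_compl_iff, Set.mem_singleton_iff, Option.some.injEq]
      norm_num
    have := (hint (-1) p₂).mp hm
    omega
  · have m1 : some ((2 * (b₁ : ℤ) + 1 : ℤ) : ℚ) ∈ infSlice k := by
      rw [← h]; exact hmem
    rw [mem_infSlice_some] at m1
    have hk1 : k ≤ 2 * (b₁ : ℤ) + 1 := by exact_mod_cast m1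
    have hk2 : ¬ k ≤ 2 * (b₁ : ℤ) := by
      intro hle
      have m2 : some ((2 * (b₁ : ℤ) : ℤ) : ℚ) ∈ infSlice k :=
        mem_infSlice_some.mpr (by exact_mod_cast hle)
      rw [← h] at m2
      have := (hint (2 * (b₁ : ℤ)) p₂).mp m2
      omega
    have hke : k = 2 * (b₁ : ℤ) + 1 := by omega
    rw [h, hke]
  · exfalso
    have m1 : some ((2 * (b₁ : ℤ) + 1 : ℤ) : ℚ) ∈ negSlice k := by
      rw [← h]; exact hmem
    rw [mem_negSlice_some] at m1
    have : (2 * (b₁ : ℤ) + 1 : ℤ) ≤ -k := by exact_mod_cast m1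
    omega

lemma col_eq (hdich : SliceDichotomy L) (hunknot : UnknotCondition L)
    (hnozero : NoZeroCondition L) (b₁ b₂ : ℕ)
    (hint : ∀ p₁ p₂ : ℤ,
      (some (p₁ : ℚ), some (p₂ : ℚ)) ∈ L ↔
        (2 * (b₁ : ℤ) + 1 ≤ p₁ ∧ 2 * (b₂ : ℤ) + 1 ≤ p₂))
    {p₁ : ℤ} (hp₁ : 2 * (b₁ : ℤ) + 1 ≤ p₁) :
    {s | (some ((p₁ : ℚ)), s) ∈ L} = infSlice (2 * (b₂ : ℤ) + 1) := by
  have hmem : (some ((p₁ : ℤ) : ℚ), some ((2 * (b₂ : ℤ) + 1 : ℤ) : ℚ)) ∈ L :=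
    (hint p₁ _).mpr ⟨hp₁, le_refl _⟩
  have hp₁0 : ((p₁ : ℤ) : ℚ) ≠ 0 := by
    have : p₁ ≠ 0 := by omega
    exact_mod_cast this
  have hn : (some ((p₁ : ℤ) : ℚ), (none : Option ℚ)) ∈ L :=
    (hunknot (some ((p₁ : ℤ) : ℚ)) (by simp [hp₁0])).2
  have hs : StandardSlice {s | (some ((p₁ : ℤ) : ℚ), s) ∈ L} :=
    (hdich (some ((p₁ : ℤ) : ℚ))).1 ⟨_, hmem, _, hn, by simp⟩
  rcases hs with h | ⟨k, hk, h⟩ | ⟨k, hk, h⟩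
  · exfalso
    have hm : some (((-1 : ℤ)) : ℚ) ∈ {s | (some ((p₁ : ℤ) : ℚ), s) ∈ L} := by
      rw [h]
      simp only [Set.mem_compl_iff, Set.mem_singleton_iff, Option.some.injEq]
      norm_num
    have := (hint p₁ (-1)).mp hm
    omega
  · have m1 : some ((2 * (b₂ : ℤ) + 1 : ℤ) : ℚ) ∈ infSlice k := by
      rw [← h]; exact hmem
    rw [mem_infSlice_some] at m1
    have hk1 : k ≤ 2 * (b₂ : ℤ) + 1 := by exact_mod_cast m1
    have hk2 : ¬ k ≤ 2 * (b₂ : ℤ) := by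
      intro hle
      have m2 : some ((2 * (b₂ : ℤ) : ℤ) : ℚ) ∈ infSlice k :=
        mem_infSlice_some.mpr (by exact_mod_cast hle)
      rw [← h] at m2
      have := (hint p₁ (2 * (b₂ : ℤ))).mp m2
      omega
    have hke : k = 2 * (b₂ : ℤ) + 1 := by omega
    rw [h, hke]
  · exfalso
    have m1 : some ((2 * (b₂ : ℤ) + 1 : ℤ) : ℚ) ∈ negSlice k := by
      rw [← h]; exact hmem
    rw [mem_negSlice_some] at m1
    have : (2 * (b₂ : ℤ) + 1 : ℤ) ≤ -k := by exact_mod_cast m1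
    omega

lemma neg_not_mem (hdich : SliceDichotomy L) (hunknot : UnknotCondition L)
    (hnozero : NoZeroCondition L) (b₁ b₂ : ℕ)
    (hint : ∀ p₁ p₂ : ℤ,
      (some (p₁ : ℚ), some (p₂ : ℚ)) ∈ L ↔
        (2 * (b₁ : ℤ) + 1 ≤ p₁ ∧ 2 * (b₂ : ℤ) + 1 ≤ p₂))
    {q : ℚ} (h : (some ((-1 : ℤ) : ℚ), some q) ∈ L) : False := by
  obtain ⟨p, hp0, hp⟩ := colInt hdich hunknot hnozero h
  obtain ⟨p', hp'0, hp'⟩ := rowInt hdich hunknot hnozero hp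
  obtain ⟨h1, h2⟩ := (hint p' p).mp hp'
  have hrow := row_eq hdich hunknot hnozero b₁ b₂ hint h2
  have hm : some ((-1 : ℤ) : ℚ) ∈ infSlice (2 * (b₁ : ℤ) + 1) := by
    rw [← hrow]; exact hp
  rw [mem_infSlice_some] at hm
  have : (2 * (b₁ : ℤ) + 1 : ℤ) ≤ -1 := by exact_mod_cast hm
  omega

end

/-- Structure theorem for the set of L-space filling slopes: if `L` satisfies
the slice dichotomy, unknot and no-zero conditions, and its integer points are
exactly those `(p₁, p₂)` with `p₁ ≥ 2b₁+1` and `p₂ ≥ 2b₂+1`, then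
`L = ([2b₁+1,∞] × [2b₂+1,∞]) ∪ ({∞} × Q*) ∪ (Q* × {∞})`. -/
theorem lspace_slope_structure (L : Set (Option ℚ × Option ℚ))
    (hdich : SliceDichotomy L) (hunknot : UnknotCondition L)
    (hnozero : NoZeroCondition L)
    (b₁ b₂ : ℕ)
    (hint : ∀ p₁ p₂ : ℤ,
      (some (p₁ : ℚ), some (p₂ : ℚ)) ∈ L ↔
        (2 * (b₁ : ℤ) + 1 ≤ p₁ ∧ 2 * (b₂ : ℤ) + 1 ≤ p₂)) :
    L = (infSlice (2 * (b₁ : ℤ) + 1) ×ˢ infSlice (2 * (b₂ : ℤ) + 1)) ∪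
        ({none} ×ˢ Qstar) ∪ (Qstar ×ˢ {none}) := by
  ext x
  obtain ⟨r, s⟩ := x
  constructor
  · intro h
    rcases r with _ | q₁ <;> rcases s with _ | q₂
    · exact Or.inl (Or.inl ⟨none_mem_infSlice, none_mem_infSlice⟩)
    · have hq₂ : q₂ ≠ 0 := by rintro rfl; exact (hnozero none).1 h
      exact Or.inl (Or.inr ⟨rfl, q₂, hq₂, rfl⟩)
    · have hq₁ : q₁ ≠ 0 := by rintro rfl; exact (hnozero none).2 h
      exact Or.inr ⟨⟨q₁, hq₁, rfl⟩, rfl⟩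
    · obtain ⟨p₁, hp₁0, h1⟩ := rowInt hdich hunknot hnozero h
      obtain ⟨p₂, hp₂0, h2⟩ := colInt hdich hunknot hnozero h1
      obtain ⟨hpa₁, hpa₂⟩ := (hint p₁ p₂).mp h2
      have hcol := col_eq hdich hunknot hnozero b₁ b₂ hint hpa₁
      have hq₂ : ((2 * (b₂ : ℤ) + 1 : ℤ) : ℚ) ≤ q₂ := by
        have hm : some q₂ ∈ infSlice (2 * (b₂ : ℤ) + 1) := by
          rw [← hcol]; exact h1
        exact mem_infSlice_some.mp hm
      have hcola := col_eq hdich hunknot hnozero b₁ b₂ hint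
        (le_refl (2 * (b₁ : ℤ) + 1))
      have h3 : (some ((2 * (b₁ : ℤ) + 1 : ℤ) : ℚ), some q₂) ∈ L := by
        have hm : some q₂ ∈ {s | (some ((2 * (b₁ : ℤ) + 1 : ℤ) : ℚ), s) ∈ L} := by
          rw [hcola]; exact mem_infSlice_some.mpr hq₂
        exact hm
      have hq₂0 : q₂ ≠ 0 := by
        rintro rfl
        have : ((2 * (b₂ : ℤ) + 1 : ℤ) : ℚ) ≤ 0 := hq₂
        have : (2 * (b₂ : ℤ) + 1 : ℤ) ≤ 0 := by exact_mod_cast this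
        omega
      have hn : ((none : Option ℚ), some q₂) ∈ L :=
        (hunknot (some q₂) (by simp [hq₂0])).1
      have hs : StandardSlice {t | (t, some q₂) ∈ L} :=
        (hdich (some q₂)).2 ⟨_, h3, _, hn, by simp⟩
      have hq₁ : ((2 * (b₁ : ℤ) + 1 : ℤ) : ℚ) ≤ q₁ := by
        rcases hs with hI | ⟨k, hk, hI⟩ | ⟨k, hk, hI⟩
        · exfalso
          apply neg_not_mem hdich hunknot hnozero b₁ b₂ hint (q := q₂)
          have hm : some ((-1 : ℤ) : ℚ) ∈ {t | (t, some q₂) ∈ L} := by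
            rw [hI]
            simp only [Set.mem_compl_iff, Set.mem_singleton_iff, Option.some.injEq]
            norm_num
          exact hm
        · have m1 : some ((2 * (b₁ : ℤ) + 1 : ℤ) : ℚ) ∈ infSlice k := by
            rw [← hI]; exact h3
          rw [mem_infSlice_some] at m1
          have hk1 : k ≤ 2 * (b₁ : ℤ) + 1 := by exact_mod_cast m1
          have hk2 : ¬ k ≤ 2 * (b₁ : ℤ) := by
            intro hle
            have m2 : some ((2 * (b₁ : ℤ) : ℤ) : ℚ) ∈ infSlice k :=
              mem_infSlice_some.mpr (by exact_mod_cast hle)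
            rw [← hI] at m2
            obtain ⟨p, hp0, hp⟩ := colInt hdich hunknot hnozero m2
            obtain ⟨c1, c2⟩ := (hint _ _).mp hp
            omega
          have hke : k = 2 * (b₁ : ℤ) + 1 := by omega
          subst hke
          have hm : some q₁ ∈ infSlice (2 * (b₁ : ℤ) + 1) := by
            rw [← hI]; exact h
          exact mem_infSlice_some.mp hm
        · exfalso
          have m1 : some ((2 * (b₁ : ℤ) + 1 : ℤ) : ℚ) ∈ negSlice k := by
            rw [← hI]; exact h3
          rw [mem_negSlice_some] at m1
          have : (2 * (b₁ : ℤ) + 1 : ℤ) ≤ -k := by exact_mod_cast m1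
          omega
      exact Or.inl (Or.inl ⟨mem_infSlice_some.mpr hq₁, mem_infSlice_some.mpr hq₂⟩)
  · intro h
    rcases h with (⟨h1, h2⟩ | ⟨h1, h2⟩) | ⟨h1, h2⟩
    · -- product case
      rcases r with _ | q₁ <;> rcases s with _ | q₂
      · exact (hunknot none (by simp)).1
      · have hq₂ : ((2 * (b₂ : ℤ) + 1 : ℤ) : ℚ) ≤ q₂ := mem_infSlice_some.mp h2
        have hq₂0 : q₂ ≠ 0 := by
          rintro rfl
          have : (2 * (b₂ : ℤ) + 1 : ℤ) ≤ 0 := by exact_mod_cast hq₂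
          omega
        exact (hunknot (some q₂) (by simp [hq₂0])).1
      · have hq₁ : ((2 * (b₁ : ℤ) + 1 : ℤ) : ℚ) ≤ q₁ := mem_infSlice_some.mp h1
        have hq₁0 : q₁ ≠ 0 := by
          rintro rfl
          have : (2 * (b₁ : ℤ) + 1 : ℤ) ≤ 0 := by exact_mod_cast hq₁
          omega
        exact (hunknot (some q₁) (by simp [hq₁0])).2
      · have hq₁ : ((2 * (b₁ : ℤ) + 1 : ℤ) : ℚ) ≤ q₁ := mem_infSlice_some.mp h1
        have hq₂ : ((2 * (b₂ : ℤ) + 1 : ℤ) : ℚ) ≤ q₂ := mem_infSlice_some.mp h2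
        have hq₁0 : q₁ ≠ 0 := by
          rintro rfl
          have : (2 * (b₁ : ℤ) + 1 : ℤ) ≤ 0 := by exact_mod_cast hq₁
          omega
        have hq₂0 : q₂ ≠ 0 := by
          rintro rfl
          have : (2 * (b₂ : ℤ) + 1 : ℤ) ≤ 0 := by exact_mod_cast hq₂
          omega
        have hrow := row_eq hdich hunknot hnozero b₁ b₂ hint
          (le_refl (2 * (b₂ : ℤ) + 1))
        have h3 : (some q₁, some ((2 * (b₂ : ℤ) + 1 : ℤ) : ℚ)) ∈ L := by
          have hm : some q₁ ∈ {t | (t, some ((2 * (b₂ : ℤ) + 1 : ℤ) : ℚ)) ∈ L} := by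
            rw [hrow]; exact mem_infSlice_some.mpr hq₁
          exact hm
        have hn : (some q₁, (none : Option ℚ)) ∈ L :=
          (hunknot (some q₁) (by simp [hq₁0])).2
        have hs : StandardSlice {s | (some q₁, s) ∈ L} :=
          (hdich (some q₁)).1 ⟨_, h3, _, hn, by simp⟩
        rcases hs with hI | ⟨k, hk, hI⟩ | ⟨k, hk, hI⟩
        · have hm : some q₂ ∈ {s | (some q₁, s) ∈ L} := by
            rw [hI]
            simp only [Set.mem_compl_iff, Set.mem_singleton_iff, Option.some.injEq]
            exact hq₂0
          exact hm
        · have m1 : some ((2 * (b₂ : ℤ) + 1 : ℤ) : ℚ) ∈ infSlice k := by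
            rw [← hI]; exact h3
          rw [mem_infSlice_some] at m1
          have hm : some q₂ ∈ {s | (some q₁, s) ∈ L} := by
            rw [hI]
            exact mem_infSlice_some.mpr (le_trans m1 hq₂)
          exact hm
        · exfalso
          have m1 : some ((2 * (b₂ : ℤ) + 1 : ℤ) : ℚ) ∈ negSlice k := by
            rw [← hI]; exact h3
          rw [mem_negSlice_some] at m1
          have : (2 * (b₂ : ℤ) + 1 : ℤ) ≤ -k := by exact_mod_cast m1
          omega
    · -- {none} × Qstar
      rw [Set.mem_singleton_iff] at h1
      subst h1
      obtain ⟨q, hq, rfl⟩ := h2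
      exact (hunknot (some q) (by simp [hq])).1
    · -- Qstar × {none}
      rw [Set.mem_singleton_iff] at h2
      subst h2
      obtain ⟨q, hq, rfl⟩ := h1
      exact (hunknot (some q) (by simp [hq])).2
end
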